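/- In a hamiltonian quadriculated disk D with cycle γ and s_1 = s_SW, and a non-respecting domino d with D ∖ d connected, there exist squares s_i ∈ D_{d,±1} and s_j ∈ D_{d,0} that are adjacent, i.e., there is a domino d̃ = s_i ∪ s_j joining the two regions; moreover D ∖ d̃ is connected and s_i ≠ s_1. -/

import Mathlib

/-- Two unit squares, identified with their lower-left lattice points, are adjacent
(share an edge) iff their lattice points are at L¹-distance 1. -/
def Adj (p q : ℤ × ℤ) : Prop := (p.1 - q.1).natAbs + (p.2 - q.2).natAbs = 1

instance (p q : ℤ × ℤ) : Decidable (Adj p q) := inferInstanceAs (Decidable (_ = 1))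

/-- `s` enumerates (1-indexed, `s 1, …, s n`) a hamiltonian cycle of the finite set of
squares `D`: it is a bijective enumeration of `D` in which consecutive squares are
adjacent and the last square is adjacent to the first. -/
def HamCycleOn (D : Finset (ℤ × ℤ)) (n : ℕ) (s : ℕ → ℤ × ℤ) : Prop :=
  (∀ i ∈ Finset.Icc 1 n, s i ∈ D) ∧
  (∀ p ∈ D, ∃ i ∈ Finset.Icc 1 n, s i = p) ∧
  (∀ i ∈ Finset.Icc 1 n, ∀ j ∈ Finset.Icc 1 n, s i = s j → i = j) ∧
  (∀ i, 1 ≤ i → i < n → Adj (s i) (s (i + 1))) ∧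
  Adj (s n) (s 1)

/-- The closed unit square with lower-left corner `p`. -/
noncomputable def UnitSq (p : ℤ × ℤ) : Set (ℝ × ℝ) :=
  Set.Icc (p.1 : ℝ) (p.1 + 1) ×ˢ Set.Icc (p.2 : ℝ) (p.2 + 1)

/-- The planar region covered by a finite set of squares. -/
noncomputable def Region (D : Finset (ℤ × ℤ)) : Set (ℝ × ℝ) := ⋃ p ∈ D, UnitSq p

/-- A quadriculated disk: the associated planar region is homeomorphic to a closed disk. -/
def IsDisk (D : Finset (ℤ × ℤ)) : Prop :=
  Nonempty (↥(Region D) ≃ₜ ↥(Metric.closedBall (0 : ℝ × ℝ) 1))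

/-- A set of squares is connected if any two of its squares are joined by a chain of
adjacent squares inside the set. -/
def ConnOn (S : Set (ℤ × ℤ)) : Prop :=
  ∀ p ∈ S, ∀ q ∈ S, Relation.ReflTransGen (fun a b => Adj a b ∧ a ∈ S ∧ b ∈ S) p q

lemma adjSymm {p q : ℤ × ℤ} (h : Adj p q) : Adj q p := by
  unfold Adj at *; omega

lemma crossStep {α : Type*} {R : α → α → Prop} {P : α → Prop} {p q : α}
    (h : Relation.ReflTransGen R p q) (hp : ¬ P p) :
    P q → ∃ x y, R x y ∧ ¬ P x ∧ P y := by
  induction h with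
  | refl => exact fun hq => absurd hq hp
  | @tail c d hpc hcd ih =>
    intro hq
    by_cases hPc : P c
    · exact ih hPc
    · exact ⟨c, d, hcd, hPc, hq⟩

lemma walkSeg (S : Set (ℤ × ℤ)) (s : ℕ → ℤ × ℤ) {u v : ℕ} (huv : u ≤ v)
    (hmem : ∀ m, u ≤ m → m ≤ v → s m ∈ S)
    (hadj : ∀ m, u ≤ m → m < v → Adj (s m) (s (m + 1))) :
    Relation.ReflTransGen (fun x y => Adj x y ∧ x ∈ S ∧ y ∈ S) (s u) (s v) := by
  induction v, huv using Nat.le_induction with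
  | base => exact .refl
  | succ v hv ih =>
    refine .tail (ih ?_ ?_) ?_
    · exact fun m h1 h2 => hmem m h1 (h2.trans (Nat.le_succ v))
    · exact fun m h1 h2 => hadj m h1 (h2.trans (Nat.lt_succ_self v))
    · exact ⟨hadj v hv (Nat.lt_succ_self v), hmem v hv (Nat.le_succ v),
        hmem (v+1) (hv.trans (Nat.le_succ v)) le_rfl⟩

lemma connAfterRemoval (D : Finset (ℤ × ℤ)) (n : ℕ) (s : ℕ → ℤ × ℤ)
    (hmem : ∀ m ∈ Finset.Icc 1 n, s m ∈ D)
    (hsurj : ∀ p ∈ D, ∃ m ∈ Finset.Icc 1 n, s m = p)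
    (hinj : ∀ u ∈ Finset.Icc 1 n, ∀ v ∈ Finset.Icc 1 n, s u = s v → u = v)
    (hstep : ∀ m, 1 ≤ m → m < n → Adj (s m) (s (m + 1)))
    (hwrap : Adj (s n) (s 1))
    (k l : ℕ) (hk : 1 ≤ k) (hkl : k < l) (hl : l ≤ n)
    (hadj : Adj (s k) (s l))
    (i j : ℕ) (hi1 : 1 ≤ i) (hin : i ≤ n) (hij : i < k ∨ l < i)
    (hj1 : k < j) (hj2 : j < l) :
    ConnOn ((↑D : Set (ℤ × ℤ)) \ {s i, s j}) := by
  have hinj' : ∀ u v, 1 ≤ u → u ≤ n → 1 ≤ v → v ≤ n → s u = s v → u = v :=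
    fun u v h1 h2 h3 h4 h =>
      hinj u (Finset.mem_Icc.mpr ⟨h1, h2⟩) v (Finset.mem_Icc.mpr ⟨h3, h4⟩) h
  set SS : Set (ℤ × ℤ) := (↑D : Set (ℤ × ℤ)) \ {s i, s j} with hSS
  have memS : ∀ m, 1 ≤ m → m ≤ n → m ≠ i → m ≠ j → s m ∈ SS := by
    intro m h1 h2 h3 h4
    rw [hSS]
    refine ⟨hmem m (Finset.mem_Icc.mpr ⟨h1, h2⟩), ?_⟩
    simp only [Set.mem_insert_iff, Set.mem_singleton_iff]
    push_neg
    exact ⟨fun h => h3 (hinj' m i h1 h2 hi1 hin h),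
           fun h => h4 (hinj' m j h1 h2 (by omega) (by omega) h)⟩
  have hsymmR : Symmetric (fun x y => Adj x y ∧ x ∈ SS ∧ y ∈ SS) :=
    fun x y h => ⟨adjSymm h.1, h.2.2, h.2.1⟩
  have rtg_symm := fun {x y : ℤ × ℤ}
      (h : Relation.ReflTransGen (fun x y => Adj x y ∧ x ∈ SS ∧ y ∈ SS) x y) =>
    (@Relation.ReflTransGen.stdSymm _ _ ⟨fun a b h => hsymmR h⟩).symm x y h
  have seg : ∀ u v, 1 ≤ u → v ≤ n → u ≤ v → (∀ m, u ≤ m → m ≤ v → m ≠ i ∧ m ≠ j) →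
      Relation.ReflTransGen (fun x y => Adj x y ∧ x ∈ SS ∧ y ∈ SS) (s u) (s v) := by
    intro u v h1 h2 huv hav
    refine walkSeg SS s huv ?_ ?_
    · intro m hm1 hm2
      exact memS m (h1.trans hm1) (hm2.trans h2) (hav m hm1 hm2).1 (hav m hm1 hm2).2
    · intro m hm1 hm2
      exact hstep m (h1.trans hm1) (lt_of_lt_of_le hm2 h2)
  have hSk : s k ∈ SS := memS k hk (by omega) (by omega) (by omega)
  have hSl : s l ∈ SS := memS l (by omega) hl (by omega) (by omega)
  have hRlk : Adj (s l) (s k) ∧ s l ∈ SS ∧ s k ∈ SS := ⟨adjSymm hadj, hSl, hSk⟩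
  have key : ∀ t, 1 ≤ t → t ≤ n → t ≠ i → t ≠ j →
      Relation.ReflTransGen (fun x y => Adj x y ∧ x ∈ SS ∧ y ∈ SS) (s t) (s k) := by
    intro t h1 h2 h3 h4
    rcases hij with hik | hli
    · -- Case A : 1 ≤ i < k < j < l ≤ n
      by_cases hwin : i < t ∧ t < j
      · rcases le_or_gt t k with htk | hkt
        · exact seg t k h1 (by omega) htk (fun m hm1 hm2 => ⟨by omega, by omega⟩)
        · exact rtg_symm (seg k t hk h2 hkt.le (fun m hm1 hm2 => ⟨by omega, by omega⟩))
      · have hcase2 : t < i ∨ j < t := by omega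
        have hTl : Relation.ReflTransGen (fun x y => Adj x y ∧ x ∈ SS ∧ y ∈ SS)
            (s t) (s l) := by
          rcases hcase2 with hti | hjt
          · have h1t := seg 1 t le_rfl h2 h1 (fun m hm1 hm2 => ⟨by omega, by omega⟩)
            have hln := seg l n (by omega) le_rfl hl (fun m hm1 hm2 => ⟨by omega, by omega⟩)
            have hS1 : s 1 ∈ SS := memS 1 le_rfl (by omega) (by omega) (by omega)
            have hSn : s n ∈ SS := memS n (by omega) le_rfl (by omega) (by omega)
            exact .trans (rtg_symm h1t)
              (.trans (.single ⟨adjSymm hwrap, hS1, hSn⟩) (rtg_symm hln))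
          · rcases le_or_gt t l with htl | hlt
            · exact seg t l h1 hl htl (fun m hm1 hm2 => ⟨by omega, by omega⟩)
            · exact rtg_symm (seg l t (by omega) h2 hlt.le
                (fun m hm1 hm2 => ⟨by omega, by omega⟩))
        exact hTl.trans (.single hRlk)
    · -- Case B : 1 ≤ k < j < l < i ≤ n
      by_cases hwin : j < t ∧ t < i
      · have hTl : Relation.ReflTransGen (fun x y => Adj x y ∧ x ∈ SS ∧ y ∈ SS)
            (s t) (s l) := by
          rcases le_or_gt t l with htl | hlt
          · exact seg t l h1 hl htl (fun m hm1 hm2 => ⟨by omega, by omega⟩)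
          · exact rtg_symm (seg l t (by omega) h2 hlt.le
              (fun m hm1 hm2 => ⟨by omega, by omega⟩))
        exact hTl.trans (.single hRlk)
      · have hcase2 : t < j ∨ i < t := by omega
        rcases hcase2 with htj | hit
        · rcases le_or_gt t k with htk | hkt
          · exact seg t k h1 (by omega) htk (fun m hm1 hm2 => ⟨by omega, by omega⟩)
          · exact rtg_symm (seg k t hk h2 hkt.le (fun m hm1 hm2 => ⟨by omega, by omega⟩))
        · have htn := seg t n h1 le_rfl h2 (fun m hm1 hm2 => ⟨by omega, by omega⟩)
          have h1k := seg 1 k le_rfl (by omega) hk (fun m hm1 hm2 => ⟨by omega, by omega⟩)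
          have hSn : s n ∈ SS := memS n (by omega) le_rfl (by omega) (by omega)
          have hS1 : s 1 ∈ SS := memS 1 le_rfl (by omega) (by omega) (by omega)
          exact htn.trans (.trans (.single ⟨hwrap, hSn, hS1⟩) h1k)
  intro p hp q hq
  have hpne : p ≠ s i ∧ p ≠ s j := by
    have h := hp.2
    simp only [Set.mem_insert_iff, Set.mem_singleton_iff] at h
    push_neg at h
    exact h
  have hqne : q ≠ s i ∧ q ≠ s j := by
    have h := hq.2
    simp only [Set.mem_insert_iff, Set.mem_singleton_iff] at h
    push_neg at h
    exact h
  obtain ⟨tp, htpicc, htpeq⟩ := hsurj p hp.1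
  obtain ⟨tq, htqicc, htqeq⟩ := hsurj q hq.1
  rw [Finset.mem_Icc] at htpicc htqicc
  have hp1 := key tp htpicc.1 htpicc.2
    (fun h => hpne.1 (by rw [← htpeq, h])) (fun h => hpne.2 (by rw [← htpeq, h]))
  have hq1 := key tq htqicc.1 htqicc.2
    (fun h => hqne.1 (by rw [← htqeq, h])) (fun h => hqne.2 (by rw [← htqeq, h]))
  rw [htpeq] at hp1
  rw [htqeq] at hq1
  exact hp1.trans (rtg_symm hq1)

/-- In a hamiltonian quadriculated disk with `s_1 = s_SW`, if the non-respecting domino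
`d = s_k ∪ s_l` does not disconnect `D`, then there is a domino `d̃ = s_i ∪ s_j` with
`s_i ∈ D_{d,±1}`, `s_j ∈ D_{d,0}`, `s_i ≠ s_1`, and `D ∖ d̃` connected. -/
theorem stmt_14 (D : Finset (ℤ × ℤ)) (n : ℕ) (s : ℕ → ℤ × ℤ)
    (hdisk : IsDisk D) (hγ : HamCycleOn D n s) (hn : 3 ≤ n)
    (a b : ℤ) (h1 : s 1 = (a, b))
    (hb : ∀ p ∈ D, b ≤ p.2) (ha : ∀ p ∈ D, p.2 = b → a ≤ p.1)
    (k l : ℕ) (hk : 1 ≤ k) (hkl : k < l) (hl : l ≤ n)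
    (hadj : Adj (s k) (s l))
    (hnr₁ : l ≠ k + 1) (hnr₂ : ¬(k = 1 ∧ l = n))
    (hconn : ConnOn ((↑D : Set (ℤ × ℤ)) \ {s k, s l})) :
    ∃ i ∈ Finset.Icc 1 n, ∃ j ∈ Finset.Icc 1 n,
      (i < k ∨ l < i) ∧ k < j ∧ j < l ∧
      Adj (s i) (s j) ∧ i ≠ 1 ∧
      ConnOn ((↑D : Set (ℤ × ℤ)) \ {s i, s j}) := by
  obtain ⟨hmem, hsurj, hinj, hstep, hwrap⟩ := hγ
  have hinj' : ∀ u v, 1 ≤ u → u ≤ n → 1 ≤ v → v ≤ n → s u = s v → u = v :=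
    fun u v hu1 hu2 hv1 hv2 h =>
      hinj u (Finset.mem_Icc.mpr ⟨hu1, hu2⟩) v (Finset.mem_Icc.mpr ⟨hv1, hv2⟩) h
  have hkll : k + 1 < l := by omega
  -- choose a starting index outside [k, l]
  have hcase : 1 < k ∨ l < n := by
    rcases eq_or_ne k 1 with rfl | hne
    · exact Or.inr (lt_of_le_of_ne hl fun h => hnr₂ ⟨rfl, h⟩)
    · exact Or.inl (lt_of_le_of_ne hk (Ne.symm hne))
  obtain ⟨m0, hm01, hm0n, hm0out⟩ : ∃ m, 1 ≤ m ∧ m ≤ n ∧ (m < k ∨ l < m) := by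
    rcases hcase with h | h
    · exact ⟨1, le_rfl, by omega, Or.inl h⟩
    · exact ⟨n, by omega, le_rfl, Or.inr h⟩
  have hmemS0 : ∀ m, 1 ≤ m → m ≤ n → m ≠ k → m ≠ l →
      s m ∈ (↑D : Set (ℤ × ℤ)) \ {s k, s l} := by
    intro m hm1 hm2 hm3 hm4
    refine ⟨hmem m (Finset.mem_Icc.mpr ⟨hm1, hm2⟩), ?_⟩
    simp only [Set.mem_insert_iff, Set.mem_singleton_iff]
    push_neg
    exact ⟨fun h => hm3 (hinj' m k hm1 hm2 hk (by omega) h),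
           fun h => hm4 (hinj' m l hm1 hm2 (by omega) hl h)⟩
  have hp0 : s m0 ∈ (↑D : Set (ℤ × ℤ)) \ {s k, s l} :=
    hmemS0 m0 hm01 hm0n (by omega) (by omega)
  have hq0 : s (k+1) ∈ (↑D : Set (ℤ × ℤ)) \ {s k, s l} :=
    hmemS0 (k+1) (by omega) (by omega) (by omega) (by omega)
  have hchain := hconn (s m0) hp0 (s (k+1)) hq0
  have hnotPp : ¬ ∃ t, k < t ∧ t < l ∧ s t = s m0 := by
    rintro ⟨t, ht1, ht2, ht3⟩
    have := hinj' t m0 (by omega) (by omega) hm01 hm0n ht3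
    omega
  obtain ⟨x, y, hxy, hnPx, t2, ht21, ht22, ht23⟩ :=
    crossStep (P := fun z => ∃ t, k < t ∧ t < l ∧ s t = z) hchain hnotPp
      ⟨k+1, by omega, by omega, rfl⟩
  obtain ⟨t1, ht1icc, ht1eq⟩ := hsurj x hxy.2.1.1
  rw [Finset.mem_Icc] at ht1icc
  have ht1k : t1 ≠ k := by
    rintro rfl
    exact hxy.2.1.2 (by rw [← ht1eq]; exact Set.mem_insert _ _)
  have ht1l : t1 ≠ l := by
    rintro rfl
    exact hxy.2.1.2 (by rw [← ht1eq]; exact Set.mem_insert_iff.mpr (Or.inr rfl))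
  have houtside : t1 < k ∨ l < t1 := by
    have hnmid : ¬ (k < t1 ∧ t1 < l) := fun h => hnPx ⟨t1, h.1, h.2, ht1eq⟩
    omega
  have hadj12 : Adj (s t1) (s t2) := by rw [ht1eq, ht23]; exact hxy.1
  refine ⟨t1, Finset.mem_Icc.mpr ⟨ht1icc.1, ht1icc.2⟩, t2,
    Finset.mem_Icc.mpr ⟨by omega, by omega⟩, houtside, ht21, ht22, hadj12, ?_, ?_⟩
  · -- t1 ≠ 1, using the corner property of s 1
    intro h1eq
    subst h1eq
    have hk2 : 2 ≤ k := by omega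
    have nbr : ∀ z ∈ D, Adj (s 1) z → z = (a+1, b) ∨ z = (a, b+1) := by
      intro z hz hadjz
      have hbz := hb z hz
      have haz := ha z hz
      obtain ⟨z1, z2⟩ := z
      rw [h1] at hadjz
      unfold Adj at hadjz
      dsimp only at hadjz hbz haz
      by_cases hz2 : z2 = b
      · have := haz hz2
        left; simp only [Prod.mk.injEq]; omega
      · right; simp only [Prod.mk.injEq]; omega
    have c2 := nbr (s 2) (hmem 2 (Finset.mem_Icc.mpr ⟨by omega, by omega⟩))
      (hstep 1 le_rfl (by omega))
    have cn := nbr (s n) (hmem n (Finset.mem_Icc.mpr ⟨by omega, le_rfl⟩))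
      (adjSymm hwrap)
    have cj := nbr (s t2) (hmem t2 (Finset.mem_Icc.mpr ⟨by omega, by omega⟩)) hadj12
    have h2n : s 2 ≠ s n := fun h => by
      have := hinj' 2 n (by omega) (by omega) (by omega) le_rfl h
      omega
    have hj2n : s t2 = s 2 ∨ s t2 = s n := by
      rcases cj with h | h
      · rcases c2 with h2 | h2
        · exact Or.inl (h.trans h2.symm)
        · rcases cn with hn' | hn'
          · exact Or.inr (h.trans hn'.symm)
          · exact absurd (h2.trans hn'.symm) h2n
      · rcases c2 with h2 | h2
        · rcases cn with hn' | hn'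
          · exact absurd (h2.trans hn'.symm) h2n
          · exact Or.inr (h.trans hn'.symm)
        · exact Or.inl (h.trans h2.symm)
    rcases hj2n with h | h
    · have := hinj' t2 2 (by omega) (by omega) (by omega) (by omega) h
      omega
    · have := hinj' t2 n (by omega) (by omega) (by omega) le_rfl h
      omega
  · exact connAfterRemoval D n s hmem hsurj hinj hstep hwrap k l hk hkl hl hadj
      t1 t2 ht1icc.1 ht1icc.2 houtside ht21 ht22
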